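/- Let G be a countable group, M ⊆ G finite, A a finite set, S = A^(A^M), and s ∈ S^G. If σ_s is invertible (i.e., bijective with inverse equal to some NUCA σ_t of finite memory), then σ_s is stably invertible: there exist a finite N ⊆ G and t ∈ T^G with T = A^(A^N) such that for every p ∈ Σ(s) there is q ∈ Σ(t) with σ_p ∘ σ_q = σ_q ∘ σ_p = Id. -/
import Mathlib


/-- The NUCA with memory `M` and configuration of local defining maps `s`. -/
def nuca {G A : Type*} [Group G] (M : Set G) (s : G → (M → A) → A)
    (x : G → A) : G → A :=
  fun g => s g fun m => x (g * (m : G))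

/-- `Σ(s)`: the closure of the shift orbit of `s` in `S^G` for the
prodiscrete topology (product of discrete topologies). -/
def orbitClosure {G S : Type*} [Group G] (s : G → S) : Set (G → S) :=
  @closure _ (@Pi.topologicalSpace G (fun _ => S) (fun _ => ⊥))
    {p | ∃ g : G, p = fun h => s (g⁻¹ * h)}

lemma nuca_shift {G A : Type*} [Group G] (M : Set G) (s : G → (M → A) → A)
    (g : G) (x : G → A) (h : G) :
    nuca M (fun k => s (g⁻¹ * k)) x h = nuca M s (fun k => x (g * k)) (g⁻¹ * h) := by
  simp only [nuca]
  congr 1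
  funext m
  congr 1
  group

lemma shift_pair {G A : Type*} [Group G] (M N : Set G)
    (s : G → (M → A) → A) (t : G → (N → A) → A)
    (ht1 : ∀ x, nuca N t (nuca M s x) = x) (g : G) (x : G → A) :
    nuca N (fun k => t (g⁻¹ * k)) (nuca M (fun k => s (g⁻¹ * k)) x) = x := by
  funext h
  rw [nuca_shift N t g _ h]
  have h2 : (fun k => nuca M (fun k => s (g⁻¹ * k)) x (g * k))
      = nuca M s (fun k => x (g * k)) := by
    funext k
    rw [nuca_shift]
    simp
  rw [h2, ht1]
  simp

lemma key {G A : Type*} [Group G] [Finite A] (M N : Set G) (hM : M.Finite) (hN : N.Finite)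
    (s : G → (M → A) → A) (t : G → (N → A) → A)
    (ht1 : ∀ x, nuca N t (nuca M s x) = x) (ht2 : ∀ x, nuca M s (nuca N t x) = x)
    (p : G → (M → A) → A) (hp : p ∈ orbitClosure s) :
    ∃ q ∈ orbitClosure t,
      (∀ x, nuca N q (nuca M p x) = x) ∧ (∀ x, nuca M p (nuca N q x) = x) := by
  classical
  haveI : Finite ↥N := hN.to_subtype
  haveI : Finite ↥M := hM.to_subtype
  letI : TopologicalSpace ((M → A) → A) := ⊥
  letI : TopologicalSpace ((N → A) → A) := ⊥
  letI : TopologicalSpace A := ⊥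
  haveI : DiscreteTopology ((M → A) → A) := ⟨rfl⟩
  haveI : DiscreteTopology ((N → A) → A) := ⟨rfl⟩
  haveI : DiscreteTopology A := ⟨rfl⟩
  have horbs : orbitClosure s = closure {p | ∃ g : G, p = fun h => s (g⁻¹ * h)} := rfl
  have horbt : orbitClosure t = closure {q | ∃ g : G, q = fun h => t (g⁻¹ * h)} := rfl
  rw [horbs] at hp
  rw [horbt]
  let S := (M → A) → A
  let T := (N → A) → A
  set P : Set ((G → S) × (G → T)) :=
    {pq | ∃ g : G, pq.1 = (fun h => s (g⁻¹ * h)) ∧ pq.2 = (fun h => t (g⁻¹ * h))} with hP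
  -- the projection to the first factor is a closed map
  have hclosed : IsClosedMap (Prod.fst : (G → S) × (G → T) → (G → S)) :=
    isClosedMap_fst_of_compactSpace
  have himg : closure {p | ∃ g : G, p = fun h => s (g⁻¹ * h)} ⊆ Prod.fst '' closure P := by
    apply closure_minimal
    · rintro p' ⟨g, rfl⟩
      exact ⟨((fun h => s (g⁻¹ * h)), (fun h => t (g⁻¹ * h))),
        subset_closure ⟨g, rfl, rfl⟩, rfl⟩
    · exact hclosed _ isClosed_closure
  obtain ⟨⟨p', q⟩, hpq, hfst⟩ := himg hp
  simp only at hfst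
  subst hfst
  have hq : q ∈ closure {q | ∃ g : G, q = fun h => t (g⁻¹ * h)} := by
    have hsub : closure P ⊆ Prod.snd ⁻¹' (closure {q | ∃ g : G, q = fun h => t (g⁻¹ * h)}) := by
      apply closure_minimal
      · rintro ⟨p'', q''⟩ ⟨g, h1, h2⟩
        exact subset_closure ⟨g, h2⟩
      · exact (isClosed_closure).preimage continuous_snd
    exact hsub hpq
  refine ⟨q, hq, ?_, ?_⟩
  · intro x
    funext g
    have hCc : IsClosed {pq : (G → S) × (G → T) | nuca N pq.2 (nuca M pq.1 x) g = x g} := by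
      have hcont : Continuous (fun pq : (G → S) × (G → T) =>
          nuca N pq.2 (nuca M pq.1 x) g) := by
        have h1 : Continuous (fun pq : (G → S) × (G → T) =>
            ((pq.2 g, fun n : N => pq.1 (g * n)) : T × (N → S))) :=
          ((continuous_apply g).comp continuous_snd).prodMk
            (continuous_pi fun n => (continuous_apply (g * (n : G))).comp continuous_fst)
        have h2 : Continuous (fun u : T × (N → S) =>
            u.1 (fun n => u.2 n (fun m => x (g * n * m)))) :=
          continuous_of_discreteTopology
        exact h2.comp h1
      exact (isClosed_singleton.preimage hcont : IsClosed _)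
    have hPC : P ⊆ {pq : (G → S) × (G → T) | nuca N pq.2 (nuca M pq.1 x) g = x g} := by
      rintro ⟨p'', q''⟩ ⟨g0, h1, h2⟩
      simp only [Set.mem_setOf_eq] at *
      rw [h1, h2, shift_pair M N s t ht1 g0 x]
    exact closure_minimal hPC hCc hpq
  · intro x
    funext g
    have hCc : IsClosed {pq : (G → S) × (G → T) | nuca M pq.1 (nuca N pq.2 x) g = x g} := by
      have hcont : Continuous (fun pq : (G → S) × (G → T) =>
          nuca M pq.1 (nuca N pq.2 x) g) := by
        have h1 : Continuous (fun pq : (G → S) × (G → T) =>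
            ((pq.1 g, fun m : M => pq.2 (g * m)) : S × (M → T))) :=
          ((continuous_apply g).comp continuous_fst).prodMk
            (continuous_pi fun m => (continuous_apply (g * (m : G))).comp continuous_snd)
        have h2 : Continuous (fun u : S × (M → T) =>
            u.1 (fun m => u.2 m (fun n => x (g * m * n)))) := by
          haveI : DiscreteTopology (↥M → T) := Pi.discreteTopology
          haveI : DiscreteTopology (S × (↥M → T)) := inferInstance
          exact continuous_of_discreteTopology
        exact h2.comp h1
      exact (isClosed_singleton.preimage hcont : IsClosed _)
    have hPC : P ⊆ {pq : (G → S) × (G → T) | nuca M pq.1 (nuca N pq.2 x) g = x g} := by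
      rintro ⟨p'', q''⟩ ⟨g0, h1, h2⟩
      simp only [Set.mem_setOf_eq] at *
      rw [h1, h2, shift_pair N M t s ht2 g0 x]
    exact closure_minimal hPC hCc hpq

theorem stmt4 {G A : Type*} [Group G] [Countable G] [Finite A]
    (M : Set G) (hM : M.Finite) (s : G → (M → A) → A)
    (hinv : ∃ N : Set G, N.Finite ∧ ∃ t : G → (N → A) → A,
      (∀ x, nuca N t (nuca M s x) = x) ∧ (∀ x, nuca M s (nuca N t x) = x)) :
    ∃ N : Set G, N.Finite ∧ ∃ t : G → (N → A) → A,
      ∀ p ∈ orbitClosure s, ∃ q ∈ orbitClosure t,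
        (∀ x, nuca N q (nuca M p x) = x) ∧ (∀ x, nuca M p (nuca N q x) = x) := by
  obtain ⟨N, hN, t, ht1, ht2⟩ := hinv
  exact ⟨N, hN, t, fun p hp => key M N hM hN s t ht1 ht2 p hp⟩
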